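/- Fix the alphabet A = {0,1,2,3} and p = 21. For every square-free word v over A and every word u over A, the word vu contains no square of period at most p if and only if the word Λ(v)u contains no square of period at most p, where Λ(v) is the longest suffix of v whose normalization belongs to Λ. -/

import Mathlib

open scoped Classical

/-- A square is a word of the form `u ++ u` with `u` nonempty. -/
def IsSquareWord {α : Type*} (w : List α) : Prop :=
  ∃ u : List α, u ≠ [] ∧ w = u ++ u

/-- A word is square-free if no factor of it is a square. -/
def SquareFree {α : Type*} (w : List α) : Prop :=
  ∀ t : List α, t <:+: w → ¬ IsSquareWord t

/-- `w` contains a square of period at most `p`. -/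
def ContainsSquarePeriodLe {α : Type*} (p : ℕ) (w : List α) : Prop :=
  ∃ u : List α, u ≠ [] ∧ u.length ≤ p ∧ (u ++ u) <:+: w

/-- A square is minimal if no proper factor of it is a square. -/
def MinimalSquare {α : Type*} (s : List α) : Prop :=
  IsSquareWord s ∧ ∀ t : List α, t <:+: s → t.length < s.length → ¬ IsSquareWord t

/-- The normalization of a word over `{0,1,2,3}`: the lexicographically smallest
word among all its images under permutations of the alphabet. -/
noncomputable def norm4 (u : List (Fin 4)) : List (Fin 4) :=
  (Finset.image (fun π : Equiv.Perm (Fin 4) => u.map π) Finset.univ).min'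
    ⟨u, Finset.mem_image.mpr ⟨Equiv.refl _, Finset.mem_univ _, by simp⟩⟩

/-- `Λ`: the set of normalized square-free prefixes of minimal squares of period
at most `21`. -/
def Lambda : Set (List (Fin 4)) :=
  {w | norm4 w = w ∧ SquareFree w ∧
    ∃ u : List (Fin 4), u ≠ [] ∧ u.length ≤ 21 ∧ MinimalSquare (u ++ u) ∧ w <+: u ++ u}

/-- `Λ(w)`: the longest suffix of `w` whose normalization belongs to `Λ`. -/
noncomputable def lambdaOf (w : List (Fin 4)) : List (Fin 4) :=
  (w.tails.find? fun s => decide (norm4 s ∈ Lambda)).getD []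

/- ### Auxiliary lemmas -/

lemma aux_infix_split {α : Type*} {m v u : List α} (h : m <:+: v ++ u) :
    m <:+: v ∨ m <:+: u ∨ ∃ t r, t <:+ v ∧ r <+: u ∧ m = t ++ r := by
  obtain ⟨s, t, hst⟩ := h
  rw [List.append_assoc, List.append_eq_append_iff] at hst
  rcases hst with ⟨a', ha1, ha2⟩ | ⟨c', hc1, hc2⟩
  · rw [List.append_eq_append_iff] at ha2
    rcases ha2 with ⟨b', hb1, hb2⟩ | ⟨d', hd1, hd2⟩
    · left; exact ⟨s, b', by rw [ha1, hb1, List.append_assoc]⟩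
    · right; right
      exact ⟨a', d', ⟨s, ha1.symm⟩, ⟨t, hd2.symm⟩, hd1⟩
  · right; left
    exact ⟨c', t, by rw [hc2, List.append_assoc]⟩

lemma aux_exists_min {α : Type*} : ∀ (n : ℕ) (s : List α), s.length ≤ n →
    IsSquareWord s → ∃ m, m <:+: s ∧ MinimalSquare m := by
  intro n
  induction n with
  | zero =>
    intro s hs h
    obtain ⟨w, hw, rfl⟩ := h
    simp only [List.length_append, Nat.le_zero, Nat.add_eq_zero] at hs
    exact absurd (List.length_eq_zero_iff.mp hs.1) hw
  | succ n ih =>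
    intro s hs h
    by_cases hm : ∀ t : List α, t <:+: s → t.length < s.length → ¬ IsSquareWord t
    · exact ⟨s, List.infix_refl s, h, hm⟩
    · push_neg at hm
      obtain ⟨t, hts, hlt, hsq⟩ := hm
      obtain ⟨m, hmt, hmm⟩ := ih t (by omega) hsq
      exact ⟨m, hmt.trans hts, hmm⟩

lemma aux_isSquare_map {α β : Type*} {f : α → β} (hf : Function.Injective f) {l : List α} :
    IsSquareWord (l.map f) ↔ IsSquareWord l := by
  constructor
  · rintro ⟨w, hw, hl⟩
    rw [List.map_eq_append_iff] at hl
    obtain ⟨a, b, rfl, ha, hb⟩ := hl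
    have hab : a = b := List.map_injective_iff.mpr hf (ha.trans hb.symm)
    refine ⟨a, ?_, by rw [hab]⟩
    rintro rfl; exact hw (by simpa using ha.symm)
  · rintro ⟨w, hw, rfl⟩
    exact ⟨w.map f, by simpa using hw, by rw [List.map_append]⟩

lemma aux_infix_map {α β : Type*} {f : α → β} {t : List β} {l : List α}
    (h : t <:+: l.map f) : ∃ t', t' <:+: l ∧ t = t'.map f := by
  obtain ⟨s, r, hsr⟩ := h
  have h1 : (s ++ t) ++ r = l.map f := hsr
  rw [List.append_eq_map_iff] at h1
  obtain ⟨l₁, l₂, rfl, h2, h3⟩ := h1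
  rw [List.map_eq_append_iff] at h2
  obtain ⟨a, b, rfl, ha, hb⟩ := h2
  exact ⟨b, ⟨a, l₂, by simp⟩, hb.symm⟩

lemma aux_squareFree_map {α β : Type*} {f : α → β} (hf : Function.Injective f) {l : List α} :
    SquareFree (l.map f) ↔ SquareFree l := by
  constructor
  · intro h t ht hsq
    exact h (t.map f) (ht.map f) ((aux_isSquare_map hf).mpr hsq)
  · intro h t ht hsq
    obtain ⟨t', ht', rfl⟩ := aux_infix_map ht
    exact h t' ht' ((aux_isSquare_map hf).mp hsq)

lemma aux_minimal_map {α β : Type*} {f : α → β} (hf : Function.Injective f) {l : List α}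
    (h : MinimalSquare l) : MinimalSquare (l.map f) := by
  refine ⟨(aux_isSquare_map hf).mpr h.1, ?_⟩
  intro t ht hlt hsq
  obtain ⟨t', ht', rfl⟩ := aux_infix_map ht
  rw [List.length_map] at hlt
  exact h.2 t' ht' (by simpa using hlt) ((aux_isSquare_map hf).mp hsq)

lemma aux_norm4_spec (u : List (Fin 4)) : ∃ π : Equiv.Perm (Fin 4), norm4 u = u.map π := by
  have h : norm4 u ∈ Finset.image (fun π : Equiv.Perm (Fin 4) => u.map π) Finset.univ := by
    unfold norm4; exact Finset.min'_mem _ _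
  obtain ⟨π, -, h⟩ := Finset.mem_image.mp h
  exact ⟨π, h.symm⟩

lemma aux_norm4_map (u : List (Fin 4)) (π : Equiv.Perm (Fin 4)) :
    norm4 (u.map π) = norm4 u := by
  have hs : Finset.image (fun σ : Equiv.Perm (Fin 4) => (u.map π).map σ) Finset.univ
      = Finset.image (fun σ : Equiv.Perm (Fin 4) => u.map σ) Finset.univ := by
    ext w
    simp only [Finset.mem_image, Finset.mem_univ, true_and]
    constructor
    · rintro ⟨σ, rfl⟩
      exact ⟨π.trans σ, by simp [List.map_map]⟩
    · rintro ⟨τ, rfl⟩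
      refine ⟨π.symm.trans τ, ?_⟩
      simp [List.map_map, Function.comp]
  unfold norm4
  apply le_antisymm
  · exact Finset.min'_le _ _ (by rw [hs]; exact Finset.min'_mem _ _)
  · exact Finset.min'_le _ _ (by rw [← hs]; exact Finset.min'_mem _ _)

lemma aux_norm_mem_lambda {t y : List (Fin 4)} (htsf : SquareFree t) (hy : y ≠ [])
    (hyl : y.length ≤ 21) (hmin : MinimalSquare (y ++ y)) (htp : t <+: y ++ y) :
    norm4 t ∈ Lambda := by
  obtain ⟨π, hπ⟩ := aux_norm4_spec t
  refine ⟨by rw [hπ, aux_norm4_map, ← hπ], ?_, y.map π, ?_, ?_, ?_, ?_⟩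
  · rw [hπ]; exact (aux_squareFree_map π.injective).mpr htsf
  · simpa using hy
  · simpa using hyl
  · rw [← List.map_append]; exact aux_minimal_map π.injective hmin
  · rw [hπ, ← List.map_append]; exact htp.map π

lemma aux_find_tails_longest {α : Type*} (p : List α → Bool) :
    ∀ (v r t : List α), v.tails.find? p = some r → t <:+ v → p t = true → t <:+ r := by
  intro v
  induction v with
  | nil => intro r t _ ht _; rw [List.suffix_nil] at ht; subst ht; exact List.nil_suffix
  | cons a l ih =>
    intro r t hf ht hp
    rw [List.tails_cons] at hf
    by_cases hpa : p (a :: l) = true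
    · rw [List.find?_cons_of_pos hpa] at hf
      obtain rfl : a :: l = r := by injection hf
      exact ht
    · rw [List.find?_cons_of_neg hpa] at hf
      rcases List.suffix_cons_iff.mp ht with rfl | ht'
      · exact absurd hp hpa
      · exact ih r t hf ht' hp

lemma aux_nil_mem_lambda : norm4 ([] : List (Fin 4)) ∈ Lambda := by
  have hn : norm4 ([] : List (Fin 4)) = [] := by
    obtain ⟨π, hπ⟩ := aux_norm4_spec []
    simpa using hπ
  rw [hn]
  refine ⟨hn, ?_, [0], by simp, by simp, ⟨⟨[0], by simp, rfl⟩, ?_⟩, List.nil_prefix⟩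
  · intro t ht hsq
    rw [List.infix_nil] at ht
    subst ht
    obtain ⟨w, hw, hww⟩ := hsq
    exact hw (List.append_eq_nil_iff.mp hww.symm).1
  · intro t ht hlt hsq
    obtain ⟨w, hw, rfl⟩ := hsq
    have hw1 : 1 ≤ w.length := List.length_pos_iff.mpr hw
    simp only [List.length_append] at hlt
    simp at hlt
    omega

lemma aux_lambda_spec (v : List (Fin 4)) :
    lambdaOf v <:+ v ∧
    ∀ t, t <:+ v → norm4 t ∈ Lambda → t <:+ lambdaOf v := by
  set p : List (Fin 4) → Bool := fun s => decide (norm4 s ∈ Lambda) with hp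
  have hsome : (v.tails.find? p).isSome := by
    rw [List.find?_isSome]
    exact ⟨[], (List.mem_tails _ _).mpr List.nil_suffix, decide_eq_true aux_nil_mem_lambda⟩
  obtain ⟨r, hr⟩ := Option.isSome_iff_exists.mp hsome
  have hl : lambdaOf v = r := by rw [lambdaOf, ← hp, hr]; rfl
  rw [hl]
  constructor
  · exact (List.mem_tails _ _).mp (List.mem_of_find?_eq_some hr)
  · intro t ht hmem
    exact aux_find_tails_longest p v r t hr ht (decide_eq_true hmem)

/-- For every square-free word `v` over `{0,1,2,3}` and every word `u`, the word `vu`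
contains no square of period at most `21` if and only if `Λ(v)u` contains no square
of period at most `21`. -/
theorem stmt10 (v u : List (Fin 4)) (hv : SquareFree v) :
    ¬ ContainsSquarePeriodLe 21 (v ++ u) ↔
      ¬ ContainsSquarePeriodLe 21 (lambdaOf v ++ u) := by
  obtain ⟨hsuf, hlong⟩ := aux_lambda_spec v
  constructor
  · intro h hc
    apply h
    obtain ⟨x, hx, hxl, hinf⟩ := hc
    obtain ⟨s, hs⟩ := hsuf
    refine ⟨x, hx, hxl, hinf.trans ?_⟩
    refine List.IsSuffix.isInfix ?_
    have h2 : s ++ (lambdaOf v ++ u) = v ++ u := by rw [← List.append_assoc, hs]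
    rw [← h2]
    exact List.suffix_append s _

  · intro h hc
    apply h
    obtain ⟨x, hx, hxl, hinf⟩ := hc
    obtain ⟨y, hy, hinf', hmin⟩ :
        ∃ y : List (Fin 4), y ≠ [] ∧ (y ++ y) <:+: (x ++ x) ∧ MinimalSquare (y ++ y) := by
      obtain ⟨m, hmx, hmm⟩ := aux_exists_min (x ++ x).length (x ++ x) le_rfl ⟨x, hx, rfl⟩
      obtain ⟨y, hy, rfl⟩ := hmm.1
      exact ⟨y, hy, hmx, hmm⟩
    have hyl : y.length ≤ 21 := by
      have := hinf'.length_le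
      simp only [List.length_append] at this
      omega
    have hmvu : (y ++ y) <:+: v ++ u := hinf'.trans hinf
    rcases aux_infix_split hmvu with hv' | hu' | ⟨t, r, htv, hru, heq⟩
    · exact absurd ⟨y, hy, rfl⟩ (hv _ hv')
    · exact ⟨y, hy, hyl, hu'.trans (List.suffix_append _ u).isInfix⟩
    · have htsf : SquareFree t := fun t' ht' => hv t' (ht'.trans htv.isInfix)
      have htp : t <+: y ++ y := by rw [heq]; exact List.prefix_append t r
      have hmem : norm4 t ∈ Lambda := aux_norm_mem_lambda htsf hy hyl hmin htp
      obtain ⟨s', hs'⟩ := hlong t htv hmem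
      obtain ⟨u', rfl⟩ := hru
      refine ⟨y, hy, hyl, ?_⟩
      rw [heq, ← hs']
      exact ⟨s', u', by simp [List.append_assoc]⟩
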